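/- Let κ₁ ∈ (0,1), A = √(1+κ₁), B = √(1-κ₁), and let e₁,...,e₄ ∈ ℝ^{2n+2} be orthonormal vectors satisfying ⟨e₁,𝓘e₃⟩ = ⟨e₁,𝓘e₄⟩ = ⟨e₂,𝓘e₃⟩ = ⟨e₂,𝓘e₄⟩ = 0 and A⟨e₁,𝓘e₂⟩ + B⟨e₃,𝓘e₄⟩ = 0, where 𝓘 is the standard complex structure on ℝ^{2n+2}. Then γ(s) = (1/√2)(cos(As)e₁ + sin(As)e₂ + cos(Bs)e₃ + sin(Bs)e₄) satisfies ⟨γ'(s), 𝓘γ(s)⟩ = 0 for all s. -/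

import Mathlib

theorem stmt_8 (n : ℕ) (κ₁ : ℝ) (hκ : κ₁ ∈ Set.Ioo (0 : ℝ) 1)
    (A B : ℝ) (hA : A = Real.sqrt (1 + κ₁)) (hB : B = Real.sqrt (1 - κ₁))
    (e : Fin 4 → EuclideanSpace ℂ (Fin (n + 1))) (he : Orthonormal ℝ e)
    (h13 : (inner ℝ (e 0) (Complex.I • e 2) : ℝ) = 0)
    (h14 : (inner ℝ (e 0) (Complex.I • e 3) : ℝ) = 0)
    (h23 : (inner ℝ (e 1) (Complex.I • e 2) : ℝ) = 0)
    (h24 : (inner ℝ (e 1) (Complex.I • e 3) : ℝ) = 0)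
    (hAB : A * (inner ℝ (e 0) (Complex.I • e 1) : ℝ)
      + B * (inner ℝ (e 2) (Complex.I • e 3) : ℝ) = 0)
    (γ : ℝ → EuclideanSpace ℂ (Fin (n + 1)))
    (hγ : γ = fun s => (1 / Real.sqrt 2) • (Real.cos (A * s) • e 0
      + Real.sin (A * s) • e 1 + Real.cos (B * s) • e 2 + Real.sin (B * s) • e 3)) :
    ∀ s : ℝ, (inner ℝ (deriv γ s) (Complex.I • γ s) : ℝ) = 0 := by
  intro s
  have hre : ∀ x y : EuclideanSpace ℂ (Fin (n+1)), (inner ℝ x y : ℝ) = (inner ℂ x y : ℂ).re := by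
    intro x y; simp [PiLp.inner_apply, Complex.re_sum]
  have hskew : ∀ x y : EuclideanSpace ℂ (Fin (n+1)),
      (inner ℝ x (Complex.I • y) : ℝ) = - (inner ℝ y (Complex.I • x) : ℝ) := by
    intro x y
    rw [hre, hre, inner_smul_right, inner_smul_right, ← inner_conj_symm y x]
    simp only [Complex.mul_re, Complex.I_re, Complex.I_im, Complex.conj_re, Complex.conj_im]
    ring
  have hzero : ∀ x : EuclideanSpace ℂ (Fin (n+1)), (inner ℝ x (Complex.I • x) : ℝ) = 0 := by
    intro x; have := hskew x x; linarith
  have h31 : (inner ℝ (e 2) (Complex.I • e 0) : ℝ) = 0 := by rw [hskew, h13]; ring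
  have h41 : (inner ℝ (e 3) (Complex.I • e 0) : ℝ) = 0 := by rw [hskew, h14]; ring
  have h32 : (inner ℝ (e 2) (Complex.I • e 1) : ℝ) = 0 := by rw [hskew, h23]; ring
  have h42 : (inner ℝ (e 3) (Complex.I • e 1) : ℝ) = 0 := by rw [hskew, h24]; ring
  have h21 := hskew (e 1) (e 0)
  have h43 := hskew (e 3) (e 2)
  have hd : HasDerivAt γ ((1 / Real.sqrt 2) •
      ((-Real.sin (A*s) * (A * 1)) • e 0 + (Real.cos (A*s) * (A * 1)) • e 1
        + (-Real.sin (B*s) * (B * 1)) • e 2 + (Real.cos (B*s) * (B * 1)) • e 3)) s := by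
    rw [hγ]
    have t0 := (((hasDerivAt_id s).const_mul A).cos).smul_const (e 0)
    have t1 := (((hasDerivAt_id s).const_mul A).sin).smul_const (e 1)
    have t2 := (((hasDerivAt_id s).const_mul B).cos).smul_const (e 2)
    have t3 := (((hasDerivAt_id s).const_mul B).sin).smul_const (e 3)
    exact HasDerivAt.const_smul (1 / Real.sqrt 2) (((t0.add t1).add t2).add t3)
  rw [hd.deriv, hγ]
  simp only [smul_add, smul_comm Complex.I, inner_add_left, inner_add_right,
    real_inner_smul_left, real_inner_smul_right, hzero, h13, h14, h23, h24,
    h31, h41, h32, h42, h21, h43]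
  have hs1 := Real.sin_sq_add_cos_sq (A*s)
  have hs2 := Real.sin_sq_add_cos_sq (B*s)
  linear_combination (- (1/Real.sqrt 2 * (1/Real.sqrt 2)) * A
      * (inner ℝ (e 0) (Complex.I • e 1) : ℝ)) * hs1
    + (- (1/Real.sqrt 2 * (1/Real.sqrt 2)) * B * (inner ℝ (e 2) (Complex.I • e 3) : ℝ)) * hs2
    - (1/Real.sqrt 2 * (1/Real.sqrt 2)) * hAB
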